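/- Existence and uniqueness of single-strain equilibrium: let φ(i) = β₁·((Λ - v₁ i)/μ)·g₁(i) - v₁ on [0, Λ/v₁], where g₁(i) = f₁(i)/i (g₁(0) = 1) is continuous, positive, and nonincreasing, and β₁, Λ, μ, v₁ > 0. Then φ is strictly decreasing, φ(Λ/v₁) = -v₁ < 0, φ(0) = v₁(R₁ - 1) with R₁ = β₁Λ/(μv₁), and φ has a root in (0, Λ/v₁) if and only if R₁ > 1; when it exists the root is unique. -/

import Mathlib

theorem single_strain_equilibrium
    (Λ μ β₁ v₁ : ℝ) (hΛ : 0 < Λ) (hμ : 0 < μ) (hβ₁ : 0 < β₁) (hv₁ : 0 < v₁)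
    (g₁ : ℝ → ℝ)
    (hg₁c : ContinuousOn g₁ (Set.Icc 0 (Λ / v₁)))
    (hg₁0 : g₁ 0 = 1)
    (hg₁pos : ∀ i ∈ Set.Icc (0:ℝ) (Λ / v₁), 0 < g₁ i ∧ g₁ i ≤ 1)
    (hg₁anti : AntitoneOn g₁ (Set.Icc 0 (Λ / v₁))) :
    StrictAntiOn (fun i => β₁ * ((Λ - v₁ * i) / μ) * g₁ i - v₁) (Set.Icc 0 (Λ / v₁)) ∧
    β₁ * ((Λ - v₁ * (Λ / v₁)) / μ) * g₁ (Λ / v₁) - v₁ = -v₁ ∧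
    β₁ * ((Λ - v₁ * 0) / μ) * g₁ 0 - v₁ = v₁ * (β₁ * Λ / (μ * v₁) - 1) ∧
    ((∃ i ∈ Set.Ioo (0:ℝ) (Λ / v₁), β₁ * ((Λ - v₁ * i) / μ) * g₁ i - v₁ = 0) ↔
      1 < β₁ * Λ / (μ * v₁)) ∧
    (∀ i ∈ Set.Ioo (0:ℝ) (Λ / v₁), ∀ j ∈ Set.Ioo (0:ℝ) (Λ / v₁),
      β₁ * ((Λ - v₁ * i) / μ) * g₁ i - v₁ = 0 →
      β₁ * ((Λ - v₁ * j) / μ) * g₁ j - v₁ = 0 → i = j) := by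
  set φ : ℝ → ℝ := fun i => β₁ * ((Λ - v₁ * i) / μ) * g₁ i - v₁ with hφ
  have hL : (0:ℝ) < Λ / v₁ := div_pos hΛ hv₁
  have hanti : StrictAntiOn φ (Set.Icc 0 (Λ / v₁)) := by
    intro x hx y hy hxy
    have hax : 0 < g₁ x := (hg₁pos x hx).1
    have hgyx : g₁ y ≤ g₁ x := hg₁anti hx hy hxy.le
    have hc : 0 ≤ β₁ * ((Λ - v₁ * y) / μ) := by
      have h2 : v₁ * y ≤ Λ := by
        have := mul_le_mul_of_nonneg_left hy.2 hv₁.le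
        rwa [mul_div_cancel₀ _ hv₁.ne'] at this
      have : 0 ≤ Λ - v₁ * y := by linarith
      positivity
    have h1 : β₁ * ((Λ - v₁ * y) / μ) < β₁ * ((Λ - v₁ * x) / μ) := by
      gcongr
    simp only [hφ]
    nlinarith [mul_le_mul_of_nonneg_left hgyx hc,
      mul_lt_mul_of_pos_right h1 hax]
  have hend : φ (Λ / v₁) = -v₁ := by
    simp only [hφ]
    field_simp
    ring
  have h0 : φ 0 = v₁ * (β₁ * Λ / (μ * v₁) - 1) := by
    simp only [hφ, hg₁0]
    field_simp
    ring
  refine ⟨hanti, hend, h0, ?_, ?_⟩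
  · constructor
    · rintro ⟨i, hi, hroot⟩
      have h01 : (0:ℝ) ∈ Set.Icc 0 (Λ / v₁) := Set.left_mem_Icc.mpr hL.le
      have hiIcc : i ∈ Set.Icc 0 (Λ / v₁) := ⟨hi.1.le, hi.2.le⟩
      have := hanti h01 hiIcc hi.1
      rw [show φ i = 0 from hroot, h0] at this
      nlinarith [this]
    · intro hR
      have hφ0 : 0 < φ 0 := by rw [h0]; nlinarith
      have hcont : ContinuousOn φ (Set.Icc 0 (Λ / v₁)) := by
        apply ContinuousOn.sub _ continuousOn_const
        exact (continuousOn_const.mul ((continuousOn_const.sub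
          (continuousOn_const.mul continuousOn_id)).div_const μ)).mul hg₁c
      have := intermediate_value_Ioo' hL.le hcont
        (a := 0) (b := Λ / v₁)
      have h0mem : (0:ℝ) ∈ Set.Ioo (φ (Λ / v₁)) (φ 0) := by
        constructor
        · rw [hend]; linarith
        · exact hφ0
      obtain ⟨i, hi, hroot⟩ := this h0mem
      exact ⟨i, hi, hroot⟩
  · intro i hi j hj hri hrj
    have hiIcc : i ∈ Set.Icc 0 (Λ / v₁) := ⟨hi.1.le, hi.2.le⟩
    have hjIcc : j ∈ Set.Icc 0 (Λ / v₁) := ⟨hj.1.le, hj.2.le⟩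
    exact hanti.injOn hiIcc hjIcc (by simp only [hφ] at hri hrj ⊢; rw [hri, hrj])
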